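/- Let X be a set equipped with two topologies τ⁺ and τ⁻. Then the bitopological space (X, τ⁺, τ⁻) is T0, compact and zero-dimensional if and only if it is compact and totally order-separated. -/

import Mathlib

open Set Topology

/-- The specialization preorder of a topology: `x ≤ y` iff every open set
containing `x` also contains `y`. -/
def SpecLE {X : Type*} (τ : TopologicalSpace X) (x y : X) : Prop :=
  ∀ U : Set X, IsOpen[τ] U → x ∈ U → y ∈ U

/-- A bitopological space is T0 if for any two distinct points there is a set,
open in one of the two topologies, containing exactly one of them. -/
def BiT0 {X : Type*} (τp τm : TopologicalSpace X) : Prop :=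
  ∀ x y : X, x ≠ y → ∃ U : Set X, (IsOpen[τp] U ∨ IsOpen[τm] U) ∧
    ((x ∈ U ∧ y ∉ U) ∨ (y ∈ U ∧ x ∉ U))

/-- A bitopological space is compact if every cover of `X` by sets, each open in
one of the two topologies, has a finite subcover. -/
def BiCompact {X : Type*} (τp τm : TopologicalSpace X) : Prop :=
  ∀ 𝒰 : Set (Set X), (∀ U ∈ 𝒰, IsOpen[τp] U ∨ IsOpen[τm] U) → ⋃₀ 𝒰 = univ →
    ∃ ℱ ⊆ 𝒰, ℱ.Finite ∧ ⋃₀ ℱ = univ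

/-- A bitopological space is zero-dimensional if every `τp`-open set is a union of
`τp`-open `τm`-closed sets, and symmetrically. -/
def BiZeroDim {X : Type*} (τp τm : TopologicalSpace X) : Prop :=
  (∀ U : Set X, IsOpen[τp] U → ∃ 𝒮 : Set (Set X),
      (∀ V ∈ 𝒮, IsOpen[τp] V ∧ IsClosed[τm] V) ∧ ⋃₀ 𝒮 = U) ∧
  (∀ U : Set X, IsOpen[τm] U → ∃ 𝒮 : Set (Set X),
      (∀ V ∈ 𝒮, IsOpen[τm] V ∧ IsClosed[τp] V) ∧ ⋃₀ 𝒮 = U)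

/-- `x ≤ y` iff `x ≤⁺ y` and `y ≤⁻ x`. -/
def BiLE {X : Type*} (τp τm : TopologicalSpace X) (x y : X) : Prop :=
  SpecLE τp x y ∧ SpecLE τm y x

/-- A bitopological space is totally order-separated if `BiLE` is a partial order and
whenever `¬ x ≤ y` there is a `τp`-open `τm`-closed set containing `x` but not `y`. -/
def TotOrdSep {X : Type*} (τp τm : TopologicalSpace X) : Prop :=
  ((∀ x : X, BiLE τp τm x x) ∧
   (∀ x y z : X, BiLE τp τm x y → BiLE τp τm y z → BiLE τp τm x z) ∧
   (∀ x y : X, BiLE τp τm x y → BiLE τp τm y x → x = y)) ∧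
  (∀ x y : X, ¬ BiLE τp τm x y →
    ∃ U : Set X, IsOpen[τp] U ∧ IsClosed[τm] U ∧ x ∈ U ∧ y ∉ U)


section Wrappers
variable {X : Type*} {τ : TopologicalSpace X}

lemma myIsOpen_compl {s : Set X} (h : IsClosed[τ] s) : IsOpen[τ] sᶜ := h.isOpen_compl

lemma myIsClosed_compl {s : Set X} (h : IsOpen[τ] s) : IsClosed[τ] sᶜ := h.isClosed_compl

lemma myIsOpen_univ : IsOpen[τ] (Set.univ : Set X) := isOpen_univ

lemma myIsClosed_univ : IsClosed[τ] (Set.univ : Set X) := isClosed_univ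

lemma myIsOpen_sInter {S : Set (Set X)} (hfin : S.Finite)
    (h : ∀ t ∈ S, IsOpen[τ] t) : IsOpen[τ] (⋂₀ S) := hfin.isOpen_sInter h

lemma myIsClosed_sInter {S : Set (Set X)} (h : ∀ t ∈ S, IsClosed[τ] t) :
    IsClosed[τ] (⋂₀ S) := isClosed_sInter h

end Wrappers

/-- Key shrinking lemma: under bi-compactness, if `x ∈ U` with `U` τp-open, and for
every point there is a τp-open τm-closed set containing `x` and avoiding that point
when it is outside `U`, then there is a τp-open τm-closed set between `x` and `U`. -/
lemma biShrink {X : Type*} (τp τm : TopologicalSpace X) (hc : BiCompact τp τm)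
    (U : Set X) (hU : IsOpen[τp] U) (x : X) (hx : x ∈ U) (V : X → Set X)
    (hVo : ∀ y, IsOpen[τp] (V y)) (hVc : ∀ y, IsClosed[τm] (V y))
    (hxV : ∀ y, x ∈ V y) (hyV : ∀ y, y ∉ U → y ∉ V y) :
    ∃ W : Set X, IsOpen[τp] W ∧ IsClosed[τm] W ∧ x ∈ W ∧ W ⊆ U := by
  obtain ⟨ℱ, hsub, hfin, hcov⟩ := hc (insert U ((fun y => (V y)ᶜ) '' Uᶜ))
    (by
      rintro W (rfl | ⟨y, -, rfl⟩)
      · exact Or.inl hU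
      · exact Or.inr (myIsOpen_compl (hVc y)))
    (by
      apply Set.eq_univ_of_forall
      intro z
      by_cases hz : z ∈ U
      · exact ⟨U, Or.inl rfl, hz⟩
      · exact ⟨(V z)ᶜ, Or.inr ⟨z, hz, rfl⟩, hyV z hz⟩)
  set 𝒢 : Set (Set X) := compl '' (ℱ \ {U}) with h𝒢def
  have h𝒢 : ∀ t ∈ 𝒢, ∃ y, t = V y := by
    rintro t ⟨W, ⟨hWℱ, hWne⟩, rfl⟩
    rcases hsub hWℱ with rfl | ⟨y, -, rfl⟩
    · exact absurd rfl hWne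
    · exact ⟨y, by simp⟩
  refine ⟨⋂₀ 𝒢, ?_, ?_, ?_, ?_⟩
  · refine myIsOpen_sInter ((hfin.diff).image _) ?_
    intro t ht
    obtain ⟨y, rfl⟩ := h𝒢 t ht
    exact hVo y
  · refine myIsClosed_sInter ?_
    intro t ht
    obtain ⟨y, rfl⟩ := h𝒢 t ht
    exact hVc y
  · refine Set.mem_sInter.mpr ?_
    intro t ht
    obtain ⟨y, rfl⟩ := h𝒢 t ht
    exact hxV y
  · intro z hz
    have : z ∈ ⋃₀ ℱ := hcov ▸ Set.mem_univ z
    obtain ⟨A, hAℱ, hzA⟩ := this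
    by_cases hA : A = U
    · exact hA ▸ hzA
    · have : z ∈ Aᶜ := Set.mem_sInter.mp hz Aᶜ ⟨A, ⟨hAℱ, hA⟩, rfl⟩
      exact absurd hzA this

lemma biCompact_symm {X : Type*} {τp τm : TopologicalSpace X} (hc : BiCompact τp τm) :
    BiCompact τm τp := fun 𝒰 h hcov => hc 𝒰 (fun U hU => (h U hU).symm) hcov

/-- A bitopological space is T0, compact and zero-dimensional iff it is compact and
totally order-separated. -/
theorem bitop_t0_compact_zeroDim_iff_compact_totOrdSep
    {X : Type*} (τp τm : TopologicalSpace X) :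
    (BiT0 τp τm ∧ BiCompact τp τm ∧ BiZeroDim τp τm) ↔
      (BiCompact τp τm ∧ TotOrdSep τp τm) := by
  constructor
  · rintro ⟨ht0, hc, hzd⟩
    have hsep : ∀ x y : X, ¬ BiLE τp τm x y →
        ∃ U : Set X, IsOpen[τp] U ∧ IsClosed[τm] U ∧ x ∈ U ∧ y ∉ U := by
      intro x y hxy
      rw [BiLE, not_and_or] at hxy
      rcases hxy with h | h
      · simp only [SpecLE, not_forall] at h
        obtain ⟨U, hUo, hxU, hyU⟩ := h
        obtain ⟨𝒮, h𝒮, hU⟩ := hzd.1 U hUo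
        have hx : x ∈ ⋃₀ 𝒮 := hU ▸ hxU
        obtain ⟨V, hV𝒮, hxV⟩ := hx
        refine ⟨V, (h𝒮 V hV𝒮).1, (h𝒮 V hV𝒮).2, hxV, fun hyV => hyU ?_⟩
        exact hU ▸ ⟨V, hV𝒮, hyV⟩
      · simp only [SpecLE, not_forall] at h
        obtain ⟨U, hUo, hyU, hxU⟩ := h
        obtain ⟨𝒮, h𝒮, hU⟩ := hzd.2 U hUo
        have hy : y ∈ ⋃₀ 𝒮 := hU ▸ hyU
        obtain ⟨V, hV𝒮, hyV⟩ := hy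
        refine ⟨Vᶜ, myIsOpen_compl (h𝒮 V hV𝒮).2, myIsClosed_compl (h𝒮 V hV𝒮).1,
          fun hxV => hxU ?_, by simpa using hyV⟩
        exact hU ▸ ⟨V, hV𝒮, hxV⟩
    refine ⟨hc, ⟨⟨fun x => ⟨fun U _ h => h, fun U _ h => h⟩,
      fun x y z hxy hyz => ⟨fun U hU hx => hyz.1 U hU (hxy.1 U hU hx),
        fun U hU hz => hxy.2 U hU (hyz.2 U hU hz)⟩, ?_⟩, hsep⟩⟩
    intro x y hxy hyx
    by_contra hne
    obtain ⟨U, hUo | hUo, ⟨hx, hy⟩ | ⟨hy, hx⟩⟩ := ht0 x y hne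
    · exact hy (hxy.1 U hUo hx)
    · exact hx (hyx.1 U hUo hy)
    · exact hy (hyx.2 U hUo hx)
    · exact hx (hxy.2 U hUo hy)
  · rintro ⟨hc, ⟨⟨hrefl, htrans, hanti⟩, hsep⟩⟩
    refine ⟨?_, hc, ?_, ?_⟩
    · -- T0
      intro x y hne
      by_cases hxy : BiLE τp τm x y
      · have hyx : ¬ BiLE τp τm y x := fun h => hne (hanti x y hxy h)
        obtain ⟨U, hUo, _, hyU, hxU⟩ := hsep y x hyx
        exact ⟨U, Or.inl hUo, Or.inr ⟨hyU, hxU⟩⟩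
      · obtain ⟨U, hUo, _, hxU, hyU⟩ := hsep x y hxy
        exact ⟨U, Or.inl hUo, Or.inl ⟨hxU, hyU⟩⟩
    · -- zero-dimensional, τp part
      intro U hUo
      refine ⟨{V | (IsOpen[τp] V ∧ IsClosed[τm] V) ∧ V ⊆ U}, fun V hV => hV.1, ?_⟩
      apply Set.Subset.antisymm
      · rintro z ⟨V, hV, hzV⟩; exact hV.2 hzV
      · intro x hx
        have hV : ∀ y : X, ∃ W : Set X, IsOpen[τp] W ∧ IsClosed[τm] W ∧ x ∈ W ∧
            (y ∉ U → y ∉ W) := by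
          intro y
          by_cases hy : y ∈ U
          · exact ⟨Set.univ, myIsOpen_univ, myIsClosed_univ, trivial, fun h => absurd hy h⟩
          · have hle : ¬ BiLE τp τm x y := fun h => hy (h.1 U hUo hx)
            obtain ⟨W, hWo, hWc, hxW, hyW⟩ := hsep x y hle
            exact ⟨W, hWo, hWc, hxW, fun _ => hyW⟩
        choose V hVo hVc hxV hyV using hV
        obtain ⟨W, hWo, hWc, hxW, hWU⟩ :=
          biShrink τp τm hc U hUo x hx V hVo hVc hxV hyV
        exact ⟨W, ⟨⟨hWo, hWc⟩, hWU⟩, hxW⟩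
    · -- zero-dimensional, τm part
      intro U hUo
      refine ⟨{V | (IsOpen[τm] V ∧ IsClosed[τp] V) ∧ V ⊆ U}, fun V hV => hV.1, ?_⟩
      apply Set.Subset.antisymm
      · rintro z ⟨V, hV, hzV⟩; exact hV.2 hzV
      · intro x hx
        have hV : ∀ y : X, ∃ W : Set X, IsOpen[τm] W ∧ IsClosed[τp] W ∧ x ∈ W ∧
            (y ∉ U → y ∉ W) := by
          intro y
          by_cases hy : y ∈ U
          · exact ⟨Set.univ, myIsOpen_univ, myIsClosed_univ, trivial, fun h => absurd hy h⟩
          · have hle : ¬ BiLE τp τm y x := fun h => hy (h.2 U hUo hx)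
            obtain ⟨W, hWo, hWc, hyW, hxW⟩ := hsep y x hle
            exact ⟨Wᶜ, myIsOpen_compl hWc, myIsClosed_compl hWo,
              hxW, fun _ h => h hyW⟩
        choose V hVo hVc hxV hyV using hV
        obtain ⟨W, hWo, hWc, hxW, hWU⟩ :=
          biShrink τm τp (biCompact_symm hc) U hUo x hx V hVo hVc hxV hyV
        exact ⟨W, ⟨⟨hWo, hWc⟩, hWU⟩, hxW⟩
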